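/- Let p ≥ 1, let f : ℝ^p → ℝ be differentiable, let ρ_x : ℝ^p → ℝ be a nonnegative integrable density, let A be an invertible p × p real matrix and b ∈ ℝ^p. Define f̃ : ℝ^p → ℝ by f̃(z) = f(A⁻¹(z − b)) and ρ_z : ℝ^p → ℝ by ρ_z(z) = |det A|⁻¹ ρ_x(A⁻¹(z − b)). Assume that for all i, j the functions x ↦ (∂f/∂x_i)(x)(∂f/∂x_j)(x)ρ_x(x) are integrable on ℝ^p. Then C = Aᵀ C̃ A, where C is the C matrix of (f, ρ_x) and C̃ is the C matrix of (f̃, ρ_z). -/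

import Mathlib

open MeasureTheory Matrix

/-- The `i`-th partial derivative of `f` at `x`. -/
noncomputable def partialDeriv' {p : ℕ} (f : (Fin p → ℝ) → ℝ) (i : Fin p)
    (x : Fin p → ℝ) : ℝ :=
  fderiv ℝ f x (Pi.single i 1)

/-- The `C` matrix of `(f, ρ)`: `C i j = ∫ ∂f/∂xᵢ ∂f/∂xⱼ ρ`. -/
noncomputable def Cmat {p : ℕ} (f : (Fin p → ℝ) → ℝ) (ρ : (Fin p → ℝ) → ℝ) :
    Matrix (Fin p) (Fin p) ℝ :=
  Matrix.of fun i j => ∫ x, partialDeriv' f i x * partialDeriv' f j x * ρ x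

/-- `fderiv` applied to a vector, as a sum of partial derivatives. -/
lemma fderiv_apply_eq_sum {p : ℕ} (f : (Fin p → ℝ) → ℝ) (x v : Fin p → ℝ) :
    fderiv ℝ f x v = ∑ k, v k * partialDeriv' f k x := by
  have hv : v = ∑ k, v k • (Pi.single k 1 : Fin p → ℝ) := by
    rw [pi_eq_sum_univ v]
    refine Finset.sum_congr rfl fun k _ => ?_
    ext j
    simp [Pi.single_apply, eq_comm]
  conv_lhs => rw [hv]
  rw [map_sum]
  refine Finset.sum_congr rfl fun k _ => ?_
  rw [(fderiv ℝ f x).map_smul]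
  rfl

/-- Change of variables for the affine map `z ↦ A⁻¹ (z - b)`. -/
lemma integral_comp_inv_affine {p : ℕ} (A : Matrix (Fin p) (Fin p) ℝ) (hA : IsUnit A.det)
    (b : Fin p → ℝ) (F : (Fin p → ℝ) → ℝ) :
    ∫ z, F (A⁻¹.mulVec (z - b)) = |A.det| * ∫ x, F x := by
  have h1 : ∫ z, F (A⁻¹.mulVec (z - b)) = ∫ w, F (A⁻¹.mulVec w) :=
    integral_sub_right_eq_self (fun w => F (A⁻¹.mulVec w)) b
  rw [h1]
  set L : (Fin p → ℝ) →ₗ[ℝ] (Fin p → ℝ) := Matrix.toLin' A⁻¹ with hL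
  have hdet : LinearMap.det L = A⁻¹.det := LinearMap.det_toLin' A⁻¹
  have hAdet : A.det ≠ 0 := hA.ne_zero
  have hdetinv : A⁻¹.det = (A.det)⁻¹ := by
    rw [Matrix.det_nonsing_inv, Ring.inverse_eq_inv']
  have hLdet : LinearMap.det L ≠ 0 := by
    rw [hdet, hdetinv]; exact inv_ne_zero hAdet
  set e : (Fin p → ℝ) ≃L[ℝ] (Fin p → ℝ) :=
    (L.equivOfDetNeZero hLdet).toContinuousLinearEquiv with he
  have hek : ∀ w, e w = A⁻¹.mulVec w := fun w => by
    simp [he, L, Matrix.toLin'_apply, LinearEquiv.coe_toContinuousLinearEquiv']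
  have hmap : Measure.map (⇑e) volume
      = ENNReal.ofReal |(LinearMap.det L)⁻¹| • volume := by
    have : ⇑e = ⇑L := funext fun w => by
      simp [he, L, LinearEquiv.coe_toContinuousLinearEquiv']
    rw [this]
    exact Measure.map_linearMap_addHaar_eq_smul_addHaar volume hLdet
  have h2 : ∫ w, F (A⁻¹.mulVec w) = ∫ w, F (e w) := by
    simp_rw [hek]
  rw [h2]
  have h3 : ∫ w, F (e w) = ∫ y, F y ∂(Measure.map e.toHomeomorph.toMeasurableEquiv volume) :=
    (MeasureTheory.integral_map_equiv e.toHomeomorph.toMeasurableEquiv F).symm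
  rw [h3]
  have hcoe : Measure.map (⇑e.toHomeomorph.toMeasurableEquiv) volume
      = Measure.map (⇑e) volume := rfl
  rw [hcoe, hmap, integral_smul_measure]
  rw [ENNReal.toReal_ofReal (abs_nonneg _)]
  rw [hdet, hdetinv, inv_inv, smul_eq_mul]

theorem C_linear_transform {p : ℕ} (hp : 1 ≤ p)
    (f : (Fin p → ℝ) → ℝ) (hf : Differentiable ℝ f)
    (ρx : (Fin p → ℝ) → ℝ) (hρ_nonneg : ∀ x, 0 ≤ ρx x) (hρ_int : Integrable ρx)
    (A : Matrix (Fin p) (Fin p) ℝ) (hA : IsUnit A.det) (b : Fin p → ℝ)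
    (ftil : (Fin p → ℝ) → ℝ) (hftil : ∀ z, ftil z = f (A⁻¹.mulVec (z - b)))
    (ρz : (Fin p → ℝ) → ℝ) (hρz : ∀ z, ρz z = |A.det|⁻¹ * ρx (A⁻¹.mulVec (z - b)))
    (hint : ∀ i j, Integrable (fun x => partialDeriv' f i x * partialDeriv' f j x * ρx x)) :
    Cmat f ρx = Aᵀ * Cmat ftil ρz * A := by
  have hAdet : A.det ≠ 0 := hA.ne_zero
  -- the derivative of g
  set L' : (Fin p → ℝ) →L[ℝ] (Fin p → ℝ) :=
    LinearMap.toContinuousLinearMap (Matrix.mulVecLin A⁻¹) with hL'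
  have hgderiv : ∀ z, HasFDerivAt (fun z => A⁻¹.mulVec (z - b)) L' z := by
    intro z
    have h0 : (fun z => A⁻¹.mulVec (z - b)) = fun z => L' z - L' b := by
      funext w
      simp [hL', Matrix.mulVecLin_apply, Matrix.mulVec_sub]
    rw [h0]
    exact (L'.hasFDerivAt).sub_const (L' b)
  -- partial derivatives of ftil
  have hpd : ∀ i z, partialDeriv' ftil i z
      = ∑ k, A⁻¹ k i * partialDeriv' f k (A⁻¹.mulVec (z - b)) := by
    intro i z
    have hcomp : HasFDerivAt ftil ((fderiv ℝ f (A⁻¹.mulVec (z - b))).comp L') z := by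
      have h1 : HasFDerivAt (f ∘ fun z => A⁻¹.mulVec (z - b))
          ((fderiv ℝ f (A⁻¹.mulVec (z - b))).comp L') z :=
        ((hf (A⁻¹.mulVec (z - b))).hasFDerivAt).comp z (hgderiv z)
      have : ftil = f ∘ fun z => A⁻¹.mulVec (z - b) := funext fun w => hftil w
      rw [this]; exact h1
    rw [partialDeriv', hcomp.fderiv]
    have hLv : L' (Pi.single i 1) = fun k => A⁻¹ k i := by
      simp [hL', Matrix.mulVecLin_apply]
      rfl
    rw [ContinuousLinearMap.comp_apply, hLv, fderiv_apply_eq_sum]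
  -- compute Cmat ftil ρz
  have hCt : ∀ i j, Cmat ftil ρz i j
      = ∑ k, ∑ l, A⁻¹ k i * A⁻¹ l j
          * ∫ x, partialDeriv' f k x * partialDeriv' f l x * ρx x := by
    intro i j
    have hGpt : ∀ z, partialDeriv' ftil i z * partialDeriv' ftil j z * ρz z
        = |A.det|⁻¹ * ((fun x => (∑ k, A⁻¹ k i * partialDeriv' f k x)
            * (∑ l, A⁻¹ l j * partialDeriv' f l x) * ρx x) (A⁻¹.mulVec (z - b))) := by
      intro z
      rw [hpd i z, hpd j z, hρz z]
      ring
    have hchg : ∫ z, partialDeriv' ftil i z * partialDeriv' ftil j z * ρz z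
        = ∫ x, (∑ k, A⁻¹ k i * partialDeriv' f k x)
            * (∑ l, A⁻¹ l j * partialDeriv' f l x) * ρx x := by
      simp_rw [hGpt]
      rw [integral_const_mul]
      rw [integral_comp_inv_affine A hA b (fun x =>
        ((∑ k, A⁻¹ k i * partialDeriv' f k x) * ∑ l, A⁻¹ l j * partialDeriv' f l x) * ρx x)]
      rw [← mul_assoc, inv_mul_cancel₀ (by positivity : |A.det| ≠ 0), one_mul]
    have hexp : ∀ x : Fin p → ℝ,
        (∑ k, A⁻¹ k i * partialDeriv' f k x) * (∑ l, A⁻¹ l j * partialDeriv' f l x) * ρx x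
        = ∑ k, ∑ l, A⁻¹ k i * A⁻¹ l j
            * (partialDeriv' f k x * partialDeriv' f l x * ρx x) := by
      intro x
      rw [Finset.sum_mul, Finset.sum_mul]
      refine Finset.sum_congr rfl fun k _ => ?_
      rw [Finset.mul_sum, Finset.sum_mul]
      refine Finset.sum_congr rfl fun l _ => ?_
      ring
    have : Cmat ftil ρz i j = ∫ x, ∑ k, ∑ l, A⁻¹ k i * A⁻¹ l j
        * (partialDeriv' f k x * partialDeriv' f l x * ρx x) := by
      show (∫ z, partialDeriv' ftil i z * partialDeriv' ftil j z * ρz z) = _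
      rw [hchg]
      exact integral_congr_ae (Filter.Eventually.of_forall hexp)
    rw [this, integral_finset_sum]
    · refine Finset.sum_congr rfl fun k _ => ?_
      rw [integral_finset_sum]
      · exact Finset.sum_congr rfl fun l _ => integral_const_mul _ _
      · exact fun l _ => (hint k l).const_mul _
    · intro k _
      exact integrable_finset_sum _ fun l _ => (hint k l).const_mul _
  -- matrix algebra
  have hCtmat : Cmat ftil ρz = (A⁻¹)ᵀ * Cmat f ρx * A⁻¹ := by
    ext i j
    rw [hCt i j]
    simp only [Matrix.mul_apply, Matrix.transpose_apply, Cmat, Matrix.of_apply]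
    rw [Finset.sum_comm]
    refine Finset.sum_congr rfl fun l _ => ?_
    rw [Finset.sum_mul]
    refine Finset.sum_congr rfl fun k _ => ?_
    ring
  rw [hCtmat]
  have h1 : Aᵀ * ((A⁻¹)ᵀ * Cmat f ρx * A⁻¹) * A
      = (A⁻¹ * A)ᵀ * Cmat f ρx * (A⁻¹ * A) := by
    rw [Matrix.transpose_mul]
    noncomm_ring [Matrix.mul_assoc]
  rw [h1, Matrix.nonsing_inv_mul A hA, Matrix.transpose_one, Matrix.one_mul, Matrix.mul_one]
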